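/- Let K be an infinite field. The invariants tr(X_1X_2X_3) and tr(X_1X_3X_2) are linearly independent modulo decomposable invariants in R_{3,3}: if α, β ∈ K and α·tr(X_1X_2X_3) + β·tr(X_1X_3X_2) lies in the ideal (R_{3,3}⁺)², then α = β = 0. -/

import Mathlib

open Matrix MvPolynomial

noncomputable section

/-- Evaluation of a coordinate-ring element at a `d`-tuple of `n × n` matrices. -/
def evalPt {K : Type} [Field K] {n d : ℕ} (A : Fin d → Matrix (Fin n) (Fin n) K) :
    MvPolynomial (Fin d × Fin n × Fin n) K →+* K :=
  MvPolynomial.eval fun p => A p.1 p.2.1 p.2.2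

/-- The algebra of invariants `R_{n,d}` of `d`-tuples of `n × n` matrices under
simultaneous conjugation. -/
def invRing (K : Type) [Field K] (n d : ℕ) :
    Subalgebra K (MvPolynomial (Fin d × Fin n × Fin n) K) where
  carrier := {f | ∀ (g : GL (Fin n) K) (A : Fin d → Matrix (Fin n) (Fin n) K),
      evalPt (fun r => (g : Matrix (Fin n) (Fin n) K) * A r *
        ((↑g⁻¹ : Matrix (Fin n) (Fin n) K))) f = evalPt A f}
  add_mem' := by intro a b ha hb g A; simp only [map_add, ha g A, hb g A]
  mul_mem' := by intro a b ha hb g A; simp only [_root_.map_mul, ha g A, hb g A]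
  one_mem' := by intro g A; simp only [_root_.map_one]
  zero_mem' := by intro g A; simp only [map_zero]
  algebraMap_mem' := by intro r g A; simp [evalPt, MvPolynomial.algebraMap_eq]

/-- The generic `n × n` matrices `X_r`. -/
def genMat (K : Type) [Field K] (n d : ℕ) (r : Fin d) :
    Matrix (Fin n) (Fin n) (MvPolynomial (Fin d × Fin n × Fin n) K) :=
  Matrix.of fun i j => MvPolynomial.X (r, i, j)

/-- The trace of a word in the generic matrices. -/
def trW (K : Type) [Field K] (n d : ℕ) (w : List (Fin d)) :
    MvPolynomial (Fin d × Fin n × Fin n) K :=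
  Matrix.trace ((w.map (genMat K n d)).prod)

/-- `σ_k(M)`: the signed coefficients of the characteristic polynomial,
`det (λ E - M) = λ^n - σ_1(M) λ^{n-1} + ⋯ + (-1)^n σ_n(M)`. -/
def sigmaC {R : Type} [CommRing R] {n : ℕ} (k : ℕ) (M : Matrix (Fin n) (Fin n) R) : R :=
  (-1) ^ k * (Matrix.charpoly M).coeff (n - k)

/-- The set `R⁺` of invariants of positive degree (zero constant term). -/
def plusPart (K : Type) [Field K] (n d : ℕ) : Set (invRing K n d) :=
  {f | MvPolynomial.coeff 0 (f : MvPolynomial (Fin d × Fin n × Fin n) K) = 0}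

/-- The ideal `(R⁺)²` of the invariant ring `R = R_{n,d}`, generated by products of
two positive-degree invariants; its elements are the decomposable invariants. -/
def decIdeal (K : Type) [Field K] (n d : ℕ) : Ideal (invRing K n d) :=
  Ideal.span {x | ∃ a ∈ plusPart K n d, ∃ b ∈ plusPart K n d, x = a * b}


variable {K : Type} [Field K]

lemma coeff_bind₁_scale {σ : Type*} (c : σ → K) (m : σ →₀ ℕ) (f : MvPolynomial σ K) :
    MvPolynomial.coeff m (MvPolynomial.bind₁
        (fun p => MvPolynomial.C (c p) * MvPolynomial.X p) f)
      = (m.prod fun v k => c v ^ k) * MvPolynomial.coeff m f := by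
  classical
  induction f using MvPolynomial.induction_on' with
  | add p q hp hq => simp [map_add, hp, hq, mul_add]
  | monomial u a =>
    rw [MvPolynomial.bind₁_monomial]
    have h1 : ∀ i, (MvPolynomial.C (c i) * MvPolynomial.X i : MvPolynomial σ K) ^ u i
        = MvPolynomial.C (c i ^ u i) * MvPolynomial.X i ^ u i := fun i => by
      rw [mul_pow, map_pow]
    simp only [h1]
    rw [Finset.prod_mul_distrib, ← map_prod, ← mul_assoc, ← MvPolynomial.C_mul]
    rw [show (∏ i ∈ u.support, (MvPolynomial.X i : MvPolynomial σ K) ^ u i)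
        = MvPolynomial.monomial u 1 from by
      rw [MvPolynomial.monomial_eq, MvPolynomial.C_1, one_mul]; rfl]
    rw [MvPolynomial.C_mul_monomial, MvPolynomial.coeff_monomial, MvPolynomial.coeff_monomial]
    split_ifs with h
    · subst h; rw [Finsupp.prod]; ring
    · ring

lemma toMultiset_inj {σ : Type*} {p q : σ →₀ ℕ} (h : Finsupp.toMultiset p = Finsupp.toMultiset q) :
    p = q := by
  classical
  ext a
  rw [← Finsupp.count_toMultiset, ← Finsupp.count_toMultiset, h]

lemma eq_single_of_card_one {σ : Type*} {p : σ →₀ ℕ}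
    (h : Multiset.card (Finsupp.toMultiset p) = 1) :
    ∃ w, p = Finsupp.single w 1 := by
  obtain ⟨w, hw⟩ := Multiset.card_eq_one.mp h
  refine ⟨w, toMultiset_inj ?_⟩
  rw [hw, Finsupp.toMultiset_single, one_nsmul]

lemma coeff_X_mul_X_mul_X {σ : Type*} [DecidableEq σ] (a b c : σ) (m : σ →₀ ℕ) :
    MvPolynomial.coeff m (MvPolynomial.X a * MvPolynomial.X b * MvPolynomial.X c :
        MvPolynomial σ K)
      = if ({a, b, c} : Multiset σ) = Finsupp.toMultiset m then 1 else 0 := by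
  have hX : ∀ x : σ, (MvPolynomial.X x : MvPolynomial σ K)
      = MvPolynomial.monomial (Finsupp.single x 1) 1 := fun _ => rfl
  have hiff : (Finsupp.single a 1 + Finsupp.single b 1 + Finsupp.single c 1 = m)
      ↔ ({a, b, c} : Multiset σ) = Finsupp.toMultiset m := by
    constructor
    · rintro rfl
      simp [Finsupp.toMultiset_single, Multiset.singleton_add]
    · intro h
      exact toMultiset_inj
        (by simp [Finsupp.toMultiset_single, Multiset.singleton_add, ← h])
  rw [hX, hX, hX, MvPolynomial.monomial_mul, MvPolynomial.monomial_mul,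
    MvPolynomial.coeff_monomial, if_congr hiff rfl rfl]
  simp

lemma coeff_single_off_diag [Infinite K] {f : MvPolynomial (Fin 3 × Fin 3 × Fin 3) K}
    (hf : f ∈ invRing K 3 3) (v : Fin 3 × Fin 3 × Fin 3) (hv : v.2.1 ≠ v.2.2) :
    MvPolynomial.coeff (Finsupp.single v 1) f = 0 := by
  classical
  obtain ⟨c, hc⟩ := Infinite.exists_notMem_finset ({0, 1} : Finset K)
  simp only [Finset.mem_insert, Finset.mem_singleton, not_or] at hc
  obtain ⟨hc0, hc1⟩ := hc
  set d : Fin 3 → K := fun k => if k = v.2.1 then c else 1 with hd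
  have hdne : ∀ k, d k ≠ 0 := by
    intro k; by_cases h : k = v.2.1 <;> simp [hd, h, hc0]
  have hmul1 : Matrix.diagonal d * Matrix.diagonal (fun k => (d k)⁻¹) = 1 := by
    rw [Matrix.diagonal_mul_diagonal]
    rw [show (fun i => d i * (d i)⁻¹) = fun _ => (1 : K) from
      funext fun i => mul_inv_cancel₀ (hdne i)]
    exact Matrix.diagonal_one
  have hmul2 : Matrix.diagonal (fun k => (d k)⁻¹) * Matrix.diagonal d = 1 := by
    rw [Matrix.diagonal_mul_diagonal]
    rw [show (fun i => (d i)⁻¹ * d i) = fun _ => (1 : K) from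
      funext fun i => inv_mul_cancel₀ (hdne i)]
    exact Matrix.diagonal_one
  set g : GL (Fin 3) K :=
    ⟨Matrix.diagonal d, Matrix.diagonal fun k => (d k)⁻¹, hmul1, hmul2⟩ with hg
  have hpoly : MvPolynomial.bind₁ (fun p : Fin 3 × Fin 3 × Fin 3 =>
      MvPolynomial.C (d p.2.1 * (d p.2.2)⁻¹) * MvPolynomial.X p) f = f := by
    apply MvPolynomial.funext
    intro x
    have h1 : MvPolynomial.eval x (MvPolynomial.bind₁ (fun p : Fin 3 × Fin 3 × Fin 3 =>
        MvPolynomial.C (d p.2.1 * (d p.2.2)⁻¹) * MvPolynomial.X p) f)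
        = MvPolynomial.eval (fun p : Fin 3 × Fin 3 × Fin 3 =>
            d p.2.1 * (d p.2.2)⁻¹ * x p) f := by
      rw [show MvPolynomial.eval x (MvPolynomial.bind₁ (fun p : Fin 3 × Fin 3 × Fin 3 =>
          MvPolynomial.C (d p.2.1 * (d p.2.2)⁻¹) * MvPolynomial.X p) f)
          = MvPolynomial.eval₂Hom (RingHom.id K) x (MvPolynomial.bind₁
            (fun p : Fin 3 × Fin 3 × Fin 3 =>
              MvPolynomial.C (d p.2.1 * (d p.2.2)⁻¹) * MvPolynomial.X p) f) from rfl]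
      rw [MvPolynomial.eval₂Hom_bind₁]
      rw [show (fun i : Fin 3 × Fin 3 × Fin 3 => MvPolynomial.eval₂Hom (RingHom.id K) x
          (MvPolynomial.C (d i.2.1 * (d i.2.2)⁻¹) * MvPolynomial.X i))
          = fun p : Fin 3 × Fin 3 × Fin 3 => d p.2.1 * (d p.2.2)⁻¹ * x p from by
        funext p; simp]
      rfl
    rw [h1]
    have h2 := hf g (fun r => Matrix.of fun i j => x (r, i, j))
    have key : (fun p : Fin 3 × Fin 3 × Fin 3 =>
        ((g : Matrix (Fin 3) (Fin 3) K) * (Matrix.of fun i j => x (p.1, i, j)) *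
          ((↑g⁻¹ : Matrix (Fin 3) (Fin 3) K))) p.2.1 p.2.2)
        = fun p : Fin 3 × Fin 3 × Fin 3 => d p.2.1 * (d p.2.2)⁻¹ * x p := by
      funext p
      show (Matrix.diagonal d * (Matrix.of fun i j => x (p.1, i, j)) *
        Matrix.diagonal (fun k => (d k)⁻¹)) p.2.1 p.2.2 = _
      rw [Matrix.mul_diagonal, Matrix.diagonal_mul, Matrix.of_apply]
      ring
    rw [← key]
    exact h2
  have hc2 := congrArg (MvPolynomial.coeff (Finsupp.single v 1)) hpoly
  rw [coeff_bind₁_scale, Finsupp.prod_single_index (by simp), pow_one] at hc2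
  have hd1 : d v.2.1 = c := by simp [hd]
  have hd2 : d v.2.2 = 1 := by simp [hd, if_neg (Ne.symm hv)]
  rw [hd1, hd2, inv_one, mul_one] at hc2
  have hz : (c - 1) * MvPolynomial.coeff (Finsupp.single v 1) f = 0 := by
    linear_combination hc2
  rcases mul_eq_zero.mp hz with h | h
  · exact absurd (sub_eq_zero.mp h) hc1
  · exact h


set_option synthInstance.maxHeartbeats 1000000 in
set_option maxHeartbeats 1000000 in
lemma decIdeal_coeff_eq_zero [Infinite K] {h : invRing K 3 3} (hh : h ∈ decIdeal K 3 3)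
    (v1 v2 v3 : Fin 3 × Fin 3 × Fin 3) (hv1 : v1.2.1 ≠ v1.2.2) (hv2 : v2.2.1 ≠ v2.2.2)
    (hv3 : v3.2.1 ≠ v3.2.2) (m' : (Fin 3 × Fin 3 × Fin 3) →₀ ℕ)
    (hm' : m' ≤ Finsupp.single v1 1 + Finsupp.single v2 1 + Finsupp.single v3 1) :
    MvPolynomial.coeff m' (h : MvPolynomial (Fin 3 × Fin 3 × Fin 3) K) = 0 := by
  classical
  set M := Finsupp.single v1 1 + Finsupp.single v2 1 + Finsupp.single v3 1 with hM
  have hsingle : ∀ (a : invRing K 3 3) (w : Fin 3 × Fin 3 × Fin 3), Finsupp.single w 1 ≤ M →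
      MvPolynomial.coeff (Finsupp.single w 1)
        (a : MvPolynomial (Fin 3 × Fin 3 × Fin 3) K) = 0 := by
    intro a w hw
    have hMw : M w ≠ 0 := by
      have := Finsupp.single_le_iff.mp hw
      omega
    have hw3 : w = v1 ∨ w = v2 ∨ w = v3 := by
      by_contra hcon
      push_neg at hcon
      rcases hcon with ⟨h1, h2, h3⟩
      apply hMw
      simp [hM, Finsupp.add_apply, Finsupp.single_apply, Ne.symm h1, Ne.symm h2, Ne.symm h3]
    rcases hw3 with rfl | rfl | rfl
    · exact coeff_single_off_diag a.2 _ hv1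
    · exact coeff_single_off_diag a.2 _ hv2
    · exact coeff_single_off_diag a.2 _ hv3
  have hcardM : Multiset.card (Finsupp.toMultiset M) = 3 := by
    simp [hM, Finsupp.toMultiset_single]
  have hne0 : ∀ p : (Fin 3 × Fin 3 × Fin 3) →₀ ℕ, p ≠ 0 →
      1 ≤ Multiset.card (Finsupp.toMultiset p) := by
    intro p hp
    rw [Nat.one_le_iff_ne_zero]
    intro hz
    exact hp (toMultiset_inj (by simp [Multiset.card_eq_zero.mp hz]))
  refine Submodule.span_induction (p := fun (x : invRing K 3 3) _ => ∀ m'' ≤ M,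
      MvPolynomial.coeff m'' (x : MvPolynomial (Fin 3 × Fin 3 × Fin 3) K) = 0)
    ?_ ?_ ?_ ?_ hh m' hm'
  · rintro x ⟨a, ha, b, hb, rfl⟩ m'' hm''
    rw [show ((a * b : invRing K 3 3) : MvPolynomial (Fin 3 × Fin 3 × Fin 3) K)
        = (a : MvPolynomial (Fin 3 × Fin 3 × Fin 3) K) * b from rfl, MvPolynomial.coeff_mul]
    apply Finset.sum_eq_zero
    rintro ⟨p, q⟩ hpq
    have hsum : p + q = m'' := Finset.HasAntidiagonal.mem_antidiagonal.mp hpq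
    by_cases hp0 : p = 0
    · subst hp0
      rw [show MvPolynomial.coeff 0 (a : MvPolynomial (Fin 3 × Fin 3 × Fin 3) K) = 0 from ha,
        zero_mul]
    by_cases hq0 : q = 0
    · subst hq0
      rw [show MvPolynomial.coeff 0 (b : MvPolynomial (Fin 3 × Fin 3 × Fin 3) K) = 0 from hb,
        mul_zero]
    have hcards : Multiset.card (Finsupp.toMultiset p)
        + Multiset.card (Finsupp.toMultiset q) ≤ 3 := by
      obtain ⟨k, hk⟩ := le_iff_exists_add.mp hm''
      have hcm : Multiset.card (Finsupp.toMultiset M) = Multiset.card (Finsupp.toMultiset p)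
          + Multiset.card (Finsupp.toMultiset q) + Multiset.card (Finsupp.toMultiset k) := by
        rw [hk, ← hsum]
        simp [Finsupp.toMultiset_add]
      omega
    have hp1 := hne0 p hp0
    have hq1 := hne0 q hq0
    have hone : Multiset.card (Finsupp.toMultiset p) = 1
        ∨ Multiset.card (Finsupp.toMultiset q) = 1 := by omega
    rcases hone with h1 | h1
    · obtain ⟨w, rfl⟩ := eq_single_of_card_one h1
      rw [hsingle a w (le_trans (le_trans (self_le_add_right _ _) hsum.le) hm''), zero_mul]
    · obtain ⟨w, rfl⟩ := eq_single_of_card_one h1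
      rw [hsingle b w (le_trans (le_trans (self_le_add_left _ _) hsum.le) hm''), mul_zero]
  · intro m'' _
    rw [show ((0 : invRing K 3 3) : MvPolynomial (Fin 3 × Fin 3 × Fin 3) K) = 0 from rfl]
    simp
  · intro x y _ _ ihx ihy m'' hm''
    rw [show ((x + y : invRing K 3 3) : MvPolynomial (Fin 3 × Fin 3 × Fin 3) K)
        = (x : MvPolynomial (Fin 3 × Fin 3 × Fin 3) K) + y from rfl, MvPolynomial.coeff_add,
      ihx m'' hm'', ihy m'' hm'', add_zero]
  · intro r x _ ihx m'' hm''
    rw [show ((r • x : invRing K 3 3) : MvPolynomial (Fin 3 × Fin 3 × Fin 3) K)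
        = (r : MvPolynomial (Fin 3 × Fin 3 × Fin 3) K) * x from rfl, MvPolynomial.coeff_mul]
    apply Finset.sum_eq_zero
    rintro ⟨p, q⟩ hpq
    have hsum : p + q = m'' := Finset.HasAntidiagonal.mem_antidiagonal.mp hpq
    rw [ihx q (le_trans (le_trans (self_le_add_left _ _) hsum.le) hm''), mul_zero]

/-- `tr(X₁X₂X₃)` and `tr(X₁X₃X₂)` are linearly independent modulo decomposable
invariants in `R_{3,3}`. -/
theorem linIndep_tr123 (K : Type) [Field K] [Infinite K] (α β : K)
    (h : ∃ h ∈ decIdeal K 3 3, (h : MvPolynomial (Fin 3 × Fin 3 × Fin 3) K) =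
      MvPolynomial.C α * trW K 3 3 [0, 1, 2] + MvPolynomial.C β * trW K 3 3 [0, 2, 1]) :
    α = 0 ∧ β = 0 := by
  classical
  obtain ⟨h, hmem, heq⟩ := h
  have hT : ∀ a b c : Fin 3, trW K 3 3 [a, b, c] = ∑ i : Fin 3, ∑ j : Fin 3, ∑ k : Fin 3,
      MvPolynomial.X (a, i, j) * MvPolynomial.X (b, j, k) * MvPolynomial.X (c, k, i) := by
    intro a b c
    simp only [trW, genMat, List.map_cons, List.map_nil, List.prod_cons, List.prod_nil,
      mul_one, Matrix.trace, Matrix.diag, Matrix.mul_apply, Matrix.of_apply, Finset.mul_sum,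
      Finset.sum_mul, mul_assoc]
  have hc : ∀ (a b c : Fin 3 × Fin 3 × Fin 3) (m : (Fin 3 × Fin 3 × Fin 3) →₀ ℕ),
      MvPolynomial.coeff m (MvPolynomial.X a * MvPolynomial.X b * MvPolynomial.X c :
        MvPolynomial (Fin 3 × Fin 3 × Fin 3) K)
      = if ({a, b, c} : Multiset (Fin 3 × Fin 3 × Fin 3)) = Finsupp.toMultiset m then 1 else 0 :=
    fun a b c m => coeff_X_mul_X_mul_X a b c m
  have e1 := decIdeal_coeff_eq_zero hmem ((0 : Fin 3), (0 : Fin 3), (1 : Fin 3)) (1, 1, 2)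
    (2, 2, 0) (by decide) (by decide) (by decide) _ le_rfl
  rw [heq, MvPolynomial.coeff_add, MvPolynomial.coeff_C_mul, MvPolynomial.coeff_C_mul,
    hT, hT] at e1
  simp (config := { decide := true }) only [MvPolynomial.coeff_sum, MvPolynomial.coeff_add, hc,
    Finsupp.toMultiset_add, Finsupp.toMultiset_single, one_nsmul, Multiset.singleton_add,
    Fin.sum_univ_three, if_false, if_true, add_zero, zero_add, mul_one, mul_zero] at e1
  have e2 := decIdeal_coeff_eq_zero hmem ((0 : Fin 3), (0 : Fin 3), (1 : Fin 3)) (2, 1, 2)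
    (1, 2, 0) (by decide) (by decide) (by decide) _ le_rfl
  rw [heq, MvPolynomial.coeff_add, MvPolynomial.coeff_C_mul, MvPolynomial.coeff_C_mul,
    hT, hT] at e2
  simp (config := { decide := true }) only [MvPolynomial.coeff_sum, MvPolynomial.coeff_add, hc,
    Finsupp.toMultiset_add, Finsupp.toMultiset_single, one_nsmul, Multiset.singleton_add,
    Fin.sum_univ_three, if_false, if_true, add_zero, zero_add, mul_one, mul_zero] at e2
  exact ⟨e1, e2⟩
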